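/- Let T be a tree on N vertices and let T' be obtained from T by a single basic tree transfer. Then T' is again a tree on N vertices and Δ_T ≺ Δ_{T'} (the degree sequence of T is strictly majorized by that of T'). -/

import Mathlib

/-- Degree of a vertex `v` in a simple graph `G` on a finite vertex set. -/
noncomputable def deg {V : Type*} [Fintype V] (G : SimpleGraph V) (v : V) : ℕ :=
  letI := Classical.decEq V
  letI := Classical.decRel G.Adj
  G.degree v

/-- The degree sequence of a graph on `Fin N`, arranged in decreasing order. -/
noncomputable def degSeq {N : ℕ} (G : SimpleGraph (Fin N)) : List ℕ :=
  ((Finset.univ.val.map (deg G)).sort (· ≤ ·)).reverse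

/-- Generalized (prefix-sum) majorization: `X ≼ Y`. -/
def Maj (X Y : List ℕ) : Prop := ∀ j : ℕ, (X.take j).sum ≤ (Y.take j).sum

/-- A basic tree transfer: choose an edge `{v,w}` with `deg v ≥ 2` and a vertex `u ≠ v` with
`deg u ≥ deg v` lying in the same connected component as `v` after deleting the edge `{v,w}`;
delete the edge `{v,w}` and add the edge `{u,w}`. -/
def BasicTreeTransfer {V : Type*} [Fintype V] (T T' : SimpleGraph V) : Prop :=
  ∃ v w u : V, T.Adj v w ∧ 2 ≤ deg T v ∧ u ≠ v ∧ deg T v ≤ deg T u ∧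
    (T.deleteEdges {s(v, w)}).Reachable u v ∧
    T' = (T.deleteEdges {s(v, w)}) ⊔ SimpleGraph.fromEdgeSet {s(u, w)}

/-- The decreasing rearrangement of a list of naturals. -/
noncomputable def sortDesc (l : List ℕ) : List ℕ :=
  (Multiset.sort (↑l : Multiset ℕ) (· ≤ ·)).reverse

/-- A path (chain) graph: a tree in which every vertex has degree at most 2. -/
def IsPathGraph {V : Type*} [Fintype V] (G : SimpleGraph V) : Prop :=
  G.IsTree ∧ ∀ v, deg G v ≤ 2

/-- The degree sequence of the chain on `N ≥ 2` vertices: `(2,…,2,1,1)`. -/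
def chainSeq (N : ℕ) : List ℕ := List.replicate (N - 2) 2 ++ List.replicate 2 1

/-- A basic transfer on a decreasing list: add 1 to entry `i`, subtract 1 from entry `j ≥ 1`,
and rearrange in decreasing order. -/
def BasicTransfer (X Y : List ℕ) : Prop :=
  ∃ i j : ℕ, i < X.length ∧ j < X.length ∧ i ≠ j ∧ 1 ≤ X.getD j 0 ∧
    Y = sortDesc ((X.set i (X.getD i 0 + 1)).set j (X.getD j 0 - 1))

lemma deg_eq_ncard {V : Type*} [Fintype V] (G : SimpleGraph V) (v : V) :
    deg G v = (G.neighborSet v).ncard := by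
  classical
  rw [deg, ← SimpleGraph.card_neighborSet_eq_degree, ← Nat.card_coe_set_eq,
    Nat.card_eq_fintype_card]

lemma reachable_of_adj_imp {V : Type*} {G H : SimpleGraph V}
    (h : ∀ x y, G.Adj x y → H.Reachable x y) {x y : V} (hr : G.Reachable x y) :
    H.Reachable x y := by
  obtain ⟨p⟩ := hr
  induction p with
  | nil => exact SimpleGraph.Reachable.refl _
  | cons ha _ ih => exact (h _ _ ha).trans ih


lemma coe_degSeq {N : ℕ} (G : SimpleGraph (Fin N)) :
    ((degSeq G : List ℕ) : Multiset ℕ) = Multiset.map (deg G) Finset.univ.val := by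
  rw [degSeq, Multiset.coe_reverse, Multiset.sort_eq]

lemma sorted_degSeq {N : ℕ} (G : SimpleGraph (Fin N)) : (degSeq G).Pairwise (· ≥ ·) := by
  rw [degSeq, List.pairwise_reverse]
  exact Multiset.pairwise_sort _ (· ≤ ·)


lemma getElem_ne_of_lt_indexOf {α : Type*} [DecidableEq α] {l : List α} {a : α} :
    ∀ {k : ℕ} (hk : k < l.length), k < l.idxOf a → l[k] ≠ a := by
  induction l with
  | nil => intro k hk; simp at hk
  | cons c t ih =>
    intro k hk hlt
    by_cases hca : c = a
    · simp [List.idxOf_cons, hca] at hlt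
    · rw [List.idxOf_cons_ne _ hca] at hlt
      match k with
      | 0 => simpa using hca
      | k + 1 =>
        simp only [List.getElem_cons_succ]
        exact ih (by simpa using hk) (by omega)

lemma coe_eq_cons_eraseIdx {l : List ℕ} {k : ℕ} (hk : k < l.length) :
    (l : Multiset ℕ) = l[k] ::ₘ (l.eraseIdx k : List ℕ) := by
  rw [Multiset.cons_coe, Multiset.coe_eq_coe, List.eraseIdx_eq_take_drop_succ]
  conv_lhs => rw [← List.take_append_drop k l, List.drop_eq_getElem_cons hk]
  exact List.perm_middle

lemma coe_set_eq {l : List ℕ} {k : ℕ} (hk : k < l.length) (x : ℕ) :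
    ((l.set k x : List ℕ) : Multiset ℕ) = x ::ₘ (l.eraseIdx k : List ℕ) := by
  rw [Multiset.cons_coe, Multiset.coe_eq_coe, List.set_eq_take_cons_drop _ hk,
    List.eraseIdx_eq_take_drop_succ]
  exact List.perm_middle

lemma eraseIdx_set_comm {l : List ℕ} {i j : ℕ} (hij : i < j) (hj : j < l.length) (x : ℕ) :
    (l.set i x).eraseIdx j = (l.eraseIdx j).set i x := by
  apply List.ext_getElem
  · simp [List.length_eraseIdx, hj]
  · intro k h1 h2
    by_cases hkj : k < j
    · rw [List.getElem_eraseIdx, dif_pos hkj, List.getElem_set, List.getElem_set,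
        List.getElem_eraseIdx, dif_pos hkj]
    · have hik : i ≠ k := by omega
      have hik1 : i ≠ k + 1 := by omega
      rw [List.getElem_eraseIdx, dif_neg hkj, List.getElem_set, List.getElem_set,
        List.getElem_eraseIdx, dif_neg hkj, if_neg hik1, if_neg hik]

lemma maj_transfer {L : List ℕ} (hL : L.Pairwise (· ≥ ·)) {a b : ℕ} (hab : b ≤ a) (hb : 1 ≤ b)
    {R : Multiset ℕ} (hLab : (L : Multiset ℕ) = a ::ₘ b ::ₘ R) :
    ∃ Y : List ℕ, Y.Pairwise (· ≥ ·) ∧ (↑Y : Multiset ℕ) = (a + 1) ::ₘ (b - 1) ::ₘ R ∧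
      (∀ k, (L.take k).sum ≤ (Y.take k).sum) ∧ L ≠ Y := by
  classical
  have hsor : ∀ k k' (hk : k < L.length) (hk' : k' < L.length), k ≤ k' → L[k'] ≤ L[k] := by
    intro k k' hk hk' hle
    rcases eq_or_lt_of_le hle with rfl | hlt
    · exact le_refl _
    · exact List.pairwise_iff_getElem.1 hL k k' hk hk' hlt
  have ha : a ∈ L := by
    have : a ∈ (L : Multiset ℕ) := by rw [hLab]; simp
    simpa using this
  have hbL : b ∈ L := by
    have : b ∈ (L : Multiset ℕ) := by rw [hLab]; simp
    simpa using this
  set i := L.idxOf a with hidef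
  have hi : i < L.length := List.idxOf_lt_length_iff.2 ha
  have hLi : L[i] = a := List.getElem_idxOf hi
  have hfirst : ∀ k (hk : k < L.length), k < i → L[k] ≠ a :=
    fun k hk hki => getElem_ne_of_lt_indexOf hk hki
  have hrb : L.reverse.idxOf b < L.length := by
    have := List.idxOf_lt_length_iff.2 (show b ∈ L.reverse by simpa using hbL)
    simpa using this
  set j := L.length - 1 - L.reverse.idxOf b with hjdef
  have hj : j < L.length := by omega
  have hLj : L[j] = b := by
    have h1 : L.reverse[L.reverse.idxOf b]'(by simpa using hrb) = b :=
      List.getElem_idxOf (by simpa using hrb)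
    rwa [List.getElem_reverse] at h1
  have hlast : ∀ k (hk : k < L.length), j < k → L[k] ≠ b := by
    intro k hk hjk hkb
    have h1 : L.length - 1 - k < L.reverse.idxOf b := by omega
    have h2 : L.length - 1 - k < L.reverse.length := by simp; omega
    apply getElem_ne_of_lt_indexOf h2 h1
    rw [List.getElem_reverse]
    convert hkb using 2
    omega
  have hcoeL : (L : Multiset ℕ) = a ::ₘ (L.eraseIdx i : List ℕ) := by
    rw [← hLi]; exact coe_eq_cons_eraseIdx hi
  have herase : ((L.eraseIdx i : List ℕ) : Multiset ℕ) = b ::ₘ R :=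
    (Multiset.cons_inj_right a).1 (by rw [← hcoeL, hLab])
  have hbe : b ∈ L.eraseIdx i := by
    have : b ∈ ((L.eraseIdx i : List ℕ) : Multiset ℕ) := by rw [herase]; simp
    simpa using this
  have hij : i < j := by
    obtain ⟨k', hk', hk'b⟩ := List.mem_iff_getElem.1 hbe
    rw [List.getElem_eraseIdx] at hk'b
    have hlen' : k' < L.length - 1 := by
      have := List.length_eraseIdx (l := L) (i := i); simp [hi] at this; omega
    have hocc : ∃ k, ∃ (hkl : k < L.length), k ≠ i ∧ L[k] = b := by
      split at hk'b
      · exact ⟨k', by omega, by omega, hk'b⟩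
      · exact ⟨k' + 1, by omega, by omega, hk'b⟩
    obtain ⟨k, hkl, hki, hkb⟩ := hocc
    have hik : i < k := by
      rcases lt_or_gt_of_ne hki with h | h
      · exfalso
        have h1 : L[i] ≤ L[k] := hsor k i hkl hi (le_of_lt h)
        exact hfirst k hkl h (by omega)
      · exact h
    by_contra hc
    exact hlast k hkl (by omega) hkb
  set Y := (L.set i (a + 1)).set j (b - 1) with hYdef
  have hYlen : Y.length = L.length := by simp [hYdef]
  have hYk : ∀ k (hk : k < L.length) (hk2 : k < Y.length),
      Y[k]'hk2 = if k = j then b - 1 else if k = i then a + 1 else L[k] := by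
    intro k hk hk2
    have hk3 : k < ((L.set i (a + 1)).set j (b - 1)).length := hk2
    show ((L.set i (a + 1)).set j (b - 1))[k]'hk3 = _
    rw [List.getElem_set, List.getElem_set]
    by_cases hkj : j = k
    · rw [if_pos hkj, if_pos hkj.symm]
    · by_cases hki : i = k
      · rw [if_neg hkj, if_pos hki, if_neg (show ¬ k = j from fun hh => hkj hh.symm),
          if_pos hki.symm]
      · rw [if_neg hkj, if_neg hki, if_neg (show ¬ k = j from fun hh => hkj hh.symm),
          if_neg (show ¬ k = i from fun hh => hki hh.symm)]
  have hfirst' : ∀ k (hk : k < L.length), k < i → a < L[k] := by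
    intro k hk hki
    have h1 : a ≤ L[k] := by rw [← hLi]; exact hsor k i hk hi (le_of_lt hki)
    exact lt_of_le_of_ne h1 (fun hh => hfirst k hk hki hh.symm)
  have hlast' : ∀ k (hk : k < L.length), j < k → L[k] < b := by
    intro k hk hjk
    have h1 : L[k] ≤ b := by rw [← hLj]; exact hsor j k hj hk (le_of_lt hjk)
    exact lt_of_le_of_ne h1 (hlast k hk hjk)
  refine ⟨Y, ?_, ?_, ?_, ?_⟩
  · -- sorted
    rw [List.pairwise_iff_getElem]
    intro k k' hk hk' hlt
    have hkL : k < L.length := by omega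
    have hk'L : k' < L.length := by omega
    rw [hYk k hkL hk, hYk k' hk'L hk']
    have hkk' : L[k'] ≤ L[k] := hsor k k' hkL hk'L (le_of_lt hlt)
    show (if k = j then b - 1 else if k = i then a + 1 else L[k])
      ≥ (if k' = j then b - 1 else if k' = i then a + 1 else L[k'])
    by_cases hkj : k = j
    · rw [if_pos hkj, if_neg (by omega : ¬ k' = j), if_neg (by omega : ¬ k' = i)]
      have h2 : L[k'] < b := hlast' k' hk'L (by omega)
      omega
    · rw [if_neg hkj]
      by_cases hki : k = i
      · rw [if_pos hki]
        by_cases hk'j : k' = j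
        · rw [if_pos hk'j]; omega
        · rw [if_neg hk'j, if_neg (by omega : ¬ k' = i)]
          have h2 : L[k'] ≤ L[i] := hsor i k' hi hk'L (by omega)
          omega
      · rw [if_neg hki]
        by_cases hk'j : k' = j
        · rw [if_pos hk'j]
          have h2 : L[j] ≤ L[k] := hsor k j hkL hj (by omega)
          omega
        · rw [if_neg hk'j]
          by_cases hk'i : k' = i
          · rw [if_pos hk'i]
            have h2 : a < L[k] := hfirst' k hkL (by omega)
            omega
          · rw [if_neg hk'i]; exact hkk'
  · -- multiset
    have h1 : (Y : Multiset ℕ) = (b - 1) ::ₘ ((L.set i (a + 1)).eraseIdx j : List ℕ) :=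
      coe_set_eq (by simp; omega) _
    rw [h1, eraseIdx_set_comm hij hj]
    have h2 : (((L.eraseIdx j).set i (a + 1) : List ℕ) : Multiset ℕ)
        = (a + 1) ::ₘ ((L.eraseIdx j).eraseIdx i : List ℕ) := by
      apply coe_set_eq
      rw [List.length_eraseIdx]; simp [hj]; omega
    rw [h2]
    have hij' : i < (L.eraseIdx j).length := by rw [List.length_eraseIdx]; simp [hj]; omega
    have h3 : ((L.eraseIdx j : List ℕ) : Multiset ℕ)
        = (L.eraseIdx j)[i] ::ₘ ((L.eraseIdx j).eraseIdx i : List ℕ) := coe_eq_cons_eraseIdx hij'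
    have h4 : (L.eraseIdx j)[i]'hij' = a := by
      rw [List.getElem_eraseIdx, dif_pos hij]; exact hLi
    have h5 : (L : Multiset ℕ) = b ::ₘ (L.eraseIdx j : List ℕ) := by
      rw [← hLj]; exact coe_eq_cons_eraseIdx hj
    rw [h4] at h3
    have h6 : a ::ₘ b ::ₘ R = a ::ₘ b ::ₘ ((L.eraseIdx j).eraseIdx i : List ℕ) := by
      rw [← hLab, h5, h3, Multiset.cons_swap]
    have h7 : R = ((L.eraseIdx j).eraseIdx i : List ℕ) :=
      (Multiset.cons_inj_right b).1 ((Multiset.cons_inj_right a).1 h6)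
    rw [Multiset.cons_swap, ← h7]
  · -- prefix sums
    have key : ∀ k, (Y.take k).sum + (if j < k then 1 else 0)
        = (L.take k).sum + (if i < k then 1 else 0) := by
      intro k
      induction k with
      | zero => simp
      | succ k ih =>
        by_cases hk : k < L.length
        · rw [List.sum_take_succ _ _ hk, List.sum_take_succ _ _ (by omega : k < Y.length),
            hYk k hk (by omega)]
          by_cases hkj : k = j
          · have hLk : L[k]'hk = b := by subst hkj; exact hLj
            rw [if_pos hkj, if_pos (by omega : j < k + 1), if_pos (by omega : i < k + 1), hLk]
            rw [if_neg (by omega : ¬ j < k), if_pos (by omega : i < k)] at ih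
            omega
          · rw [if_neg hkj]
            by_cases hki : k = i
            · have hLk : L[k]'hk = a := by subst hki; exact hLi
              rw [if_pos hki, if_neg (by omega : ¬ j < k + 1), if_pos (by omega : i < k + 1), hLk]
              rw [if_neg (by omega : ¬ j < k), if_neg (by omega : ¬ i < k)] at ih
              omega
            · rw [if_neg hki]
              by_cases h1 : j < k
              · rw [if_pos (by omega : j < k + 1), if_pos (by omega : i < k + 1)]
                rw [if_pos h1, if_pos (by omega : i < k)] at ih
                omega
              · rw [if_neg (by omega : ¬ j < k + 1)]
                rw [if_neg h1] at ih
                by_cases h2 : i < k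
                · rw [if_pos (by omega : i < k + 1)]
                  rw [if_pos h2] at ih
                  omega
                · rw [if_neg (by omega : ¬ i < k + 1)]
                  rw [if_neg h2] at ih
                  omega
        · rw [List.take_of_length_le (by omega : L.length ≤ k + 1),
            List.take_of_length_le (by omega : Y.length ≤ k + 1)]
          rw [List.take_of_length_le (by omega : L.length ≤ k),
            List.take_of_length_le (by omega : Y.length ≤ k)] at ih
          rw [if_pos (by omega : j < k + 1), if_pos (by omega : i < k + 1)]
          rw [if_pos (by omega : j < k), if_pos (by omega : i < k)] at ih
          omega
    intro k
    have hkey := key k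
    by_cases h1 : j < k
    · rw [if_pos h1, if_pos (by omega : i < k)] at hkey; omega
    · rw [if_neg h1] at hkey
      by_cases h2 : i < k
      · rw [if_pos h2] at hkey; omega
      · rw [if_neg h2] at hkey; omega
  · -- ≠
    intro heq
    have h1 : L[i] = Y[i]'(by omega) := List.getElem_of_eq heq hi
    rw [hYk i hi (by omega), if_neg (by omega : ¬ i = j), if_pos rfl, hLi] at h1
    omega


/-- a single basic tree transfer applied to a tree yields again a tree, whose
degree sequence strictly majorizes that of the original tree. -/
theorem stmt_2 {N : ℕ} (T T' : SimpleGraph (Fin N)) (hT : T.IsTree)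
    (h : BasicTreeTransfer T T') :
    T'.IsTree ∧ Maj (degSeq T) (degSeq T') ∧ degSeq T ≠ degSeq T' := by
  classical
  obtain ⟨v, w, u, hadj, hdegv, huv_ne, hdeg_le, hreach, hT'⟩ := h
  set D := T.deleteEdges {s(v, w)} with hD
  have hvw_ne : v ≠ w := hadj.ne
  have hbridge : ¬ D.Reachable v w := by
    have hb := (SimpleGraph.isAcyclic_iff_forall_adj_isBridge.1 hT.2) hadj
    rw [SimpleGraph.isBridge_iff] at hb
    exact hb
  have huw_ne : u ≠ w := by
    rintro rfl
    exact hbridge hreach.symm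
  have hnadjuw : ¬ T.Adj u w := by
    intro hadjuw
    have hDuw : D.Adj u w := by
      rw [hD, SimpleGraph.deleteEdges_adj]
      refine ⟨hadjuw, ?_⟩
      simp only [Set.mem_singleton_iff, Sym2.eq_iff]
      push_neg
      exact ⟨fun h1 => absurd h1 huv_ne, fun h1 => absurd h1 huw_ne⟩
    exact hbridge (hreach.symm.trans hDuw.reachable)
  have hT'adj : ∀ x y, T'.Adj x y ↔
      (T.Adj x y ∧ ¬ s(x, y) = s(v, w)) ∨ (s(x, y) = s(u, w) ∧ x ≠ y) := by
    intro x y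
    rw [hT', hD]
    simp only [SimpleGraph.sup_adj, SimpleGraph.deleteEdges_adj, SimpleGraph.fromEdgeSet_adj,
      Set.mem_singleton_iff]
  -- connectivity
  have hDle : D ≤ T' := by rw [hT']; exact le_sup_left
  have hT'uw : T'.Adj u w := (hT'adj u w).2 (Or.inr ⟨rfl, huw_ne⟩)
  have hT'vw : T'.Reachable v w :=
    (hreach.symm.mono hDle).trans hT'uw.reachable
  have hadj_reach : ∀ x y, T.Adj x y → T'.Reachable x y := by
    intro x y hxy
    by_cases hcase : s(x, y) = s(v, w)
    · rcases Sym2.eq_iff.1 hcase with ⟨rfl, rfl⟩ | ⟨rfl, rfl⟩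
      · exact hT'vw
      · exact hT'vw.symm
    · refine SimpleGraph.Adj.reachable (hDle ?_)
      rw [hD, SimpleGraph.deleteEdges_adj]
      exact ⟨hxy, by simpa using hcase⟩
  have hconn : T'.Connected := by
    rw [SimpleGraph.connected_iff]
    have hTc := hT.1
    exact ⟨fun x y => reachable_of_adj_imp hadj_reach (hTc.preconnected x y),
      hTc.nonempty⟩
  -- acyclicity
  have hacyc : T'.IsAcyclic := by
    intro x c hc
    by_cases he : s(u, w) ∈ c.edges
    · have h2 := SimpleGraph.adj_and_reachable_delete_edges_iff_exists_cycle.2 ⟨x, c, hc, he⟩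
      have h3 : (T' \ SimpleGraph.fromEdgeSet {s(u, w)}) ≤ D := by
        intro x y hxy
        rw [SimpleGraph.sdiff_adj, SimpleGraph.fromEdgeSet_adj] at hxy
        obtain ⟨hxy1, hxy2⟩ := hxy
        rcases (hT'adj x y).1 hxy1 with ⟨h4, h5⟩ | ⟨h4, h5⟩
        · rw [hD, SimpleGraph.deleteEdges_adj]
          exact ⟨h4, by simpa using h5⟩
        · exact absurd ⟨h4, h5⟩ hxy2
      have h4 : D.Reachable u w := h2.2.mono h3
      exact hbridge (hreach.symm.trans h4)
    · have hedges : ∀ e ∈ c.edges, e ∈ T.edgeSet := by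
        intro e hec
        have h5 := c.edges_subset_edgeSet hec
        rw [hT', SimpleGraph.edgeSet_sup, hD, SimpleGraph.edgeSet_deleteEdges,
          SimpleGraph.edgeSet_fromEdgeSet] at h5
        rcases h5 with h5 | h5
        · exact h5.1
        · exact absurd (h5.1 ▸ hec) he
      exact hT.2 (c.transfer T hedges) (hc.transfer hedges)
  -- degrees
  have hnu : T'.neighborSet u = insert w (T.neighborSet u) := by
    ext y
    simp only [SimpleGraph.mem_neighborSet, Set.mem_insert_iff, hT'adj, Sym2.eq_iff]
    aesop
  have hnv : T'.neighborSet v = T.neighborSet v \ {w} := by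
    ext y
    simp only [SimpleGraph.mem_neighborSet, Set.mem_diff, Set.mem_singleton_iff, hT'adj,
      Sym2.eq_iff]
    aesop
  have hnw : T'.neighborSet w = insert u (T.neighborSet w \ {v}) := by
    ext y
    simp only [SimpleGraph.mem_neighborSet, Set.mem_insert_iff, Set.mem_diff,
      Set.mem_singleton_iff, hT'adj, Sym2.eq_iff]
    aesop
  have hnx : ∀ x, x ≠ u → x ≠ v → x ≠ w → T'.neighborSet x = T.neighborSet x := by
    intro x hxu hxv hxw
    ext y
    simp only [SimpleGraph.mem_neighborSet, hT'adj, Sym2.eq_iff]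
    constructor
    · rintro (⟨h1, _⟩ | ⟨h1, _⟩)
      · exact h1
      · rcases h1 with h1 | h1
        · exact (hxu h1.1).elim
        · exact (hxw h1.1).elim
    · intro h1
      refine Or.inl ⟨h1, ?_⟩
      rintro (h2 | h2)
      · exact hxv h2.1
      · exact hxw h2.1
  have hdegu' : deg T' u = deg T u + 1 := by
    rw [deg_eq_ncard, deg_eq_ncard, hnu,
      Set.ncard_insert_of_notMem (s := T.neighborSet u)
        (by rw [SimpleGraph.mem_neighborSet]; exact hnadjuw) (Set.toFinite _)]
  have hdegv' : deg T' v = deg T v - 1 := by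
    rw [deg_eq_ncard, deg_eq_ncard, hnv,
      Set.ncard_diff_singleton_of_mem (s := T.neighborSet v)
        ((T.mem_neighborSet v w).2 hadj)]
  have hdegw' : deg T' w = deg T w := by
    rw [deg_eq_ncard, deg_eq_ncard, hnw,
      Set.ncard_insert_of_notMem (s := T.neighborSet w \ {v})
        (fun hmem => hnadjuw (((T.mem_neighborSet w u).1 hmem.1).symm)) (Set.toFinite _),
      Set.ncard_diff_singleton_add_one (s := T.neighborSet w)
        ((T.mem_neighborSet w v).2 hadj.symm) (Set.toFinite _)]
  have hdeg_other : ∀ x : Fin N, x ≠ u → x ≠ v → deg T' x = deg T x := by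
    intro x hxu hxv
    by_cases hxw : x = w
    · rw [hxw]; exact hdegw'
    · rw [deg_eq_ncard, deg_eq_ncard, hnx x hxu hxv hxw]
  -- multiset of degrees
  set F := (Finset.univ.erase u).erase v with hF
  have hm : (Finset.univ : Finset (Fin N)).val = u ::ₘ v ::ₘ F.val := by
    rw [hF, Finset.erase_val, Finset.erase_val]
    rw [Multiset.cons_erase ((Multiset.mem_erase_of_ne huv_ne.symm).2
      (Finset.mem_def.1 (Finset.mem_univ v)))]
    rw [Multiset.cons_erase (Finset.mem_def.1 (Finset.mem_univ u))]
  have hFmem : ∀ x ∈ F, x ≠ u ∧ x ≠ v := by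
    intro x hx
    rw [hF, Finset.mem_erase] at hx
    obtain ⟨hxv, hx2⟩ := hx
    rw [Finset.mem_erase] at hx2
    exact ⟨hx2.1, hxv⟩
  have hmapT : Multiset.map (deg T) Finset.univ.val
      = deg T u ::ₘ deg T v ::ₘ Multiset.map (deg T) F.val := by
    rw [hm]; simp [Multiset.map_cons]
  have hmapT' : Multiset.map (deg T') Finset.univ.val
      = (deg T u + 1) ::ₘ (deg T v - 1) ::ₘ Multiset.map (deg T) F.val := by
    rw [hm]
    simp only [Multiset.map_cons]
    rw [hdegu', hdegv']
    congr 2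
    apply Multiset.map_congr rfl
    intro x hx
    have hx2 := hFmem x (Finset.mem_def.2 hx)
    exact hdeg_other x hx2.1 hx2.2
  obtain ⟨Y, hYsort, hYcoe, hYmaj, hYne⟩ :=
    maj_transfer (sorted_degSeq T) hdeg_le (by omega)
      (R := Multiset.map (deg T) F.val) (by rw [coe_degSeq, hmapT])
  have hYT' : degSeq T' = Y := by
    haveI : IsAntisymm ℕ (· ≥ ·) := ⟨fun _ _ h1 h2 => le_antisymm h2 h1⟩
    refine List.Perm.eq_of_pairwise (fun _ _ _ _ h1 h2 => le_antisymm h2 h1) (sorted_degSeq T') hYsort ?_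
    rw [← Multiset.coe_eq_coe, coe_degSeq, hYcoe, hmapT']
  refine ⟨⟨hconn, hacyc⟩, ?_, ?_⟩
  · intro k
    rw [hYT']
    exact hYmaj k
  · rw [hYT']
    exact hYne
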